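/- Let Z₀, Z₁, …, Zₙ be i.i.d. with P(Z > x) = x^{−α}, x ≥ 1, and Y₁, …, Yₙ i.i.d. with P(Y > x) = x^{−β}, x ≥ 1 (α > β > 1), independent of the Z's. Set X_i = Z_i − Y_i Z_{i−1}. Then P(X₁ + ⋯ + Xₙ > x) ≤ P(Z > x) = x^{−α} for all x ≥ 1; in particular P(X₁+⋯+Xₙ > x) is NOT asymptotic to n·P(X₁ > x) ∼ n x^{−α}, so the single-big-jump conclusion fails. -/

import Mathlib

open MeasureTheory Filter ProbabilityTheory

/-- With `Z₀,…,Zₙ` i.i.d. Pareto(α) and `Y₁,…,Yₙ` i.i.d. Pareto(β)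
(`α > β > 1`), all mutually independent, and `Xᵢ = Zᵢ − YᵢZ_{i−1}`, one has
`P(X₁+⋯+Xₙ > x) ≤ P(Z > x) = x^{−α}` for `x ≥ 1`; in particular, for `n ≥ 2`,
`P(X₁+⋯+Xₙ > x)` is not asymptotic to `n x^{−α}`, so the single-big-jump
conclusion fails. -/
theorem example6_single_big_jump_fails
    {Ω : Type*} [MeasurableSpace Ω] (μ : Measure Ω) [IsProbabilityMeasure μ]
    (α β : ℝ) (hαβ : β < α) (hβ : 1 < β)
    (Z Y : ℕ → Ω → ℝ)
    (hZ_meas : ∀ i, Measurable (Z i)) (hY_meas : ∀ i, Measurable (Y i))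
    (hZ_ge : ∀ i ω, 1 ≤ Z i ω) (hY_ge : ∀ i ω, 1 ≤ Y i ω)
    (hZ_tail : ∀ i, ∀ x : ℝ, 1 ≤ x → (μ {ω | x < Z i ω}).toReal = x ^ (-α))
    (hY_tail : ∀ i, ∀ x : ℝ, 1 ≤ x → (μ {ω | x < Y i ω}).toReal = x ^ (-β))
    (hindep : iIndepFun
      (Sum.elim Z Y) μ)
    (n : ℕ) (hn : 1 ≤ n) :
    (∀ x : ℝ, 1 ≤ x →
      (μ {ω | x < ∑ i ∈ Finset.range n,
          (Z (i + 1) ω - Y (i + 1) ω * Z i ω)}).toReal ≤ x ^ (-α)) ∧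
    (2 ≤ n → ¬ Tendsto
      (fun x : ℝ => (μ {ω | x < ∑ i ∈ Finset.range n,
          (Z (i + 1) ω - Y (i + 1) ω * Z i ω)}).toReal / ((n : ℝ) * x ^ (-α)))
      atTop (nhds 1)) := by
  have key : ∀ m : ℕ, ∀ ω : Ω, ∑ i ∈ Finset.range m,
      (Z (i + 1) ω - Y (i + 1) ω * Z i ω) ≤ Z m ω - Z 0 ω := by
    intro m
    induction m with
    | zero => intro ω; simp
    | succ k ih =>
      intro ω
      rw [Finset.sum_range_succ]
      have h1 := ih ω
      have h2 : Z k ω ≤ Y (k + 1) ω * Z k ω :=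
        le_mul_of_one_le_left (by linarith [hZ_ge k ω]) (hY_ge (k + 1) ω)
      linarith
  have part1 : ∀ x : ℝ, 1 ≤ x →
      (μ {ω | x < ∑ i ∈ Finset.range n,
          (Z (i + 1) ω - Y (i + 1) ω * Z i ω)}).toReal ≤ x ^ (-α) := by
    intro x hx
    have hsub : {ω | x < ∑ i ∈ Finset.range n, (Z (i + 1) ω - Y (i + 1) ω * Z i ω)}
        ⊆ {ω | x < Z n ω} := by
      intro ω hω
      have := key n ω
      have := hZ_ge 0 ω
      simp only [Set.mem_setOf_eq] at hω ⊢
      linarith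
    calc (μ {ω | x < ∑ i ∈ Finset.range n, (Z (i + 1) ω - Y (i + 1) ω * Z i ω)}).toReal
        ≤ (μ {ω | x < Z n ω}).toReal :=
          ENNReal.toReal_mono (measure_ne_top μ _) (measure_mono hsub)
      _ = x ^ (-α) := hZ_tail n x hx
  refine ⟨part1, fun hn2 hT => ?_⟩
  have hbound : ∀ x : ℝ, 1 ≤ x →
      (μ {ω | x < ∑ i ∈ Finset.range n,
          (Z (i + 1) ω - Y (i + 1) ω * Z i ω)}).toReal / ((n : ℝ) * x ^ (-α)) ≤ 1 / 2 := by
    intro x hx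
    have hxpos : (0:ℝ) < x ^ (-α) := Real.rpow_pos_of_pos (by linarith) _
    have hnpos : (0:ℝ) < (n : ℝ) := by positivity
    have hdpos : (0:ℝ) < (n : ℝ) * x ^ (-α) := by positivity
    have h1 := part1 x hx
    calc (μ {ω | x < ∑ i ∈ Finset.range n,
            (Z (i + 1) ω - Y (i + 1) ω * Z i ω)}).toReal / ((n : ℝ) * x ^ (-α))
        ≤ x ^ (-α) / ((n : ℝ) * x ^ (-α)) := by
          exact div_le_div_of_nonneg_right h1 hdpos.le
      _ = 1 / (n : ℝ) := by field_simp
      _ ≤ 1 / 2 := by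
          apply one_div_le_one_div_of_le (by norm_num)
          exact_mod_cast hn2
  have hev : ∀ᶠ x : ℝ in atTop, (1:ℝ)/2 <
      (μ {ω | x < ∑ i ∈ Finset.range n,
          (Z (i + 1) ω - Y (i + 1) ω * Z i ω)}).toReal / ((n : ℝ) * x ^ (-α)) :=
    hT.eventually (eventually_gt_nhds (by norm_num))
  obtain ⟨x, hx1, hx2⟩ := ((eventually_ge_atTop (1:ℝ)).and hev).exists
  exact absurd (hbound x hx1) (not_le.mpr hx2)
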